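/- Let γ > 0 and 0 < a < b < 1. Define Q(z) = e^{-1/(2z)}·√(z/(1−z)), K(z) = −(1/γ)·√((1−z)/z³)·(2z−1)·e^{1/(2z)} + (√(2πe)/γ)·erfi(√((1−z)/(2z))) with erfi(x) = (2/√π)∫_0^x e^{t²} dt, S(u,v) = ∫_u^v Q(z) dz, and R(u,v) = ∫_u^v Q(z)K(z) dz. Set T(y) = ( S(y,b)·R(a,y) − S(a,y)·R(y,b) ) / S(a,b) for y ∈ [a,b]. Then T(a) = T(b) = 0, and for every y ∈ (a,b), T is twice differentiable at y with −γ y·T'(y) + 2γ y³(1−y)·T''(y) = −1. -/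

import Mathlib

/-- The imaginary error function erfi(x) = (2/√π)∫_0^x e^{t²} dt. -/
noncomputable def erfi (x : ℝ) : ℝ :=
  (2 / Real.sqrt Real.pi) * ∫ t in (0 : ℝ)..x, Real.exp (t ^ 2)

/-- Optimal homodyne scale density Q(z) = e^{-1/(2z)}·√(z/(1−z)). -/
noncomputable def Qhom (z : ℝ) : ℝ :=
  Real.exp (-1 / (2 * z)) * Real.sqrt (z / (1 - z))

/-- Optimal homodyne function
K(z) = −(1/γ)√((1−z)/z³)(2z−1)e^{1/(2z)} + (√(2πe)/γ)erfi(√((1−z)/(2z))). -/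
noncomputable def Khom (γ z : ℝ) : ℝ :=
  -(1 / γ) * Real.sqrt ((1 - z) / z ^ 3) * (2 * z - 1) * Real.exp (1 / (2 * z))
    + (Real.sqrt (2 * Real.pi * Real.exp 1) / γ) *
        erfi (Real.sqrt ((1 - z) / (2 * z)))

/-- Optimal homodyne scale integral S(u,v) = ∫_u^v Q(z) dz. -/
noncomputable def Shom (u v : ℝ) : ℝ := ∫ z in u..v, Qhom z

/-- Optimal homodyne R(u,v) = ∫_u^v Q(z)K(z) dz. -/
noncomputable def Rhom (γ u v : ℝ) : ℝ := ∫ z in u..v, Qhom z * Khom γ z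

lemma erfi_hasDerivAt (x : ℝ) :
    HasDerivAt erfi (2 / Real.sqrt Real.pi * Real.exp (x ^ 2)) x := by
  have hc : Continuous fun t : ℝ => Real.exp (t ^ 2) := by continuity
  have h : HasDerivAt (fun u : ℝ => ∫ t in (0:ℝ)..u, Real.exp (t ^ 2))
      (Real.exp (x ^ 2)) x :=
    intervalIntegral.integral_hasDerivAt_right (hc.intervalIntegrable 0 x)
      (hc.stronglyMeasurableAtFilter _ _) hc.continuousAt
  exact h.const_mul (2 / Real.sqrt Real.pi)

lemma Q_hasDerivAt {z : ℝ} (h0 : 0 < z) (h1 : z < 1) :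
    HasDerivAt Qhom (Qhom z * (1 / (2 * z ^ 2) + 1 / (2 * z * (1 - z)))) z := by
  have hz1 : (0:ℝ) < 1 - z := by linarith
  have hratio : (0:ℝ) < z / (1 - z) := div_pos h0 hz1
  have h1' : HasDerivAt (fun w : ℝ => -1 / (2 * w)) (1 / (2 * z ^ 2)) z := by
    have := (hasDerivAt_inv (ne_of_gt h0)).const_mul (-1/2 : ℝ)
    have heq : (fun w : ℝ => -1/2 * w⁻¹) = fun w => -1 / (2 * w) := by
      funext w; ring
    rw [heq] at this
    refine this.congr_deriv (Eq.symm ?_); field_simp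
  have hexp : HasDerivAt (fun w : ℝ => Real.exp (-1 / (2 * w)))
      (Real.exp (-1 / (2 * z)) * (1 / (2 * z ^ 2))) z := h1'.exp
  have hin : HasDerivAt (fun w : ℝ => w / (1 - w))
      ((1 * (1 - z) - z * (0 - 1)) / (1 - z) ^ 2) z :=
    (hasDerivAt_id z).div ((hasDerivAt_const z 1).sub (hasDerivAt_id z)) (ne_of_gt hz1)
  have hsq : HasDerivAt (fun w : ℝ => Real.sqrt (w / (1 - w)))
      (((1 * (1 - z) - z * (0 - 1)) / (1 - z) ^ 2) / (2 * Real.sqrt (z / (1 - z)))) z :=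
    hin.sqrt (ne_of_gt hratio)
  have := hexp.mul hsq
  refine this.congr_deriv (Eq.symm ?_)
  have hsplit : Real.sqrt (z / (1 - z)) = Real.sqrt z / Real.sqrt (1 - z) := by
    rw [Real.sqrt_div h0.le]
  simp only [Qhom, hsplit]
  set E := Real.exp (-1 / (2 * z)) with hEdef
  set p := Real.sqrt z with hpdef
  set q := Real.sqrt (1 - z) with hqdef
  have hp : p ^ 2 = z := Real.sq_sqrt h0.le
  have hq : q ^ 2 = 1 - z := Real.sq_sqrt hz1.le
  have hp0 : 0 < p := Real.sqrt_pos.2 h0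
  have hq0 : 0 < q := Real.sqrt_pos.2 hz1
  rw [← hp]
  rw [show (1:ℝ) - p^2 = q^2 by rw [hp]; exact hq.symm]
  have hpq : p ^ 2 + q ^ 2 = 1 := by rw [hp, hq]; ring
  have hE : 0 < E := Real.exp_pos _
  have hpq' : q ^ 2 + p ^ 2 = 1 := by linarith
  field_simp
  rw [hpq']
  linear_combination (-(1 + p^2)) * hpq'

lemma half_inv_hasDerivAt {z : ℝ} (h0 : 0 < z) :
    HasDerivAt (fun w : ℝ => 1 / (2 * w)) (-(1 / (2 * z ^ 2))) z := by
  have := (hasDerivAt_inv (ne_of_gt h0)).const_mul (1/2 : ℝ)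
  have heq : (fun w : ℝ => 1/2 * w⁻¹) = fun w => 1 / (2 * w) := by
    funext w; ring
  rw [heq] at this
  refine this.congr_deriv (Eq.symm ?_); field_simp

-- first summand (without -(1/γ) factor)

lemma K1_hasDerivAt {z : ℝ} (h0 : 0 < z) (h1 : z < 1) :
    HasDerivAt (fun w : ℝ => Real.sqrt ((1 - w) / w ^ 3) * (2 * w - 1) * Real.exp (1 / (2 * w)))
      (Real.exp (1 / (2 * z)) * (1 - 2 * z ^ 2) /
        (2 * z ^ 3 * Real.sqrt z * Real.sqrt (1 - z))) z := by
  have hz1 : (0:ℝ) < 1 - z := by linarith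
  have hz3 : (0:ℝ) < z ^ 3 := by positivity
  have hr : (0:ℝ) < (1 - z) / z ^ 3 := div_pos hz1 hz3
  have hAin : HasDerivAt (fun w : ℝ => (1 - w) / w ^ 3)
      (((0 - 1) * z ^ 3 - (1 - z) * ((3:ℕ) * z ^ 2)) / (z ^ 3) ^ 2) z :=
    (((hasDerivAt_const z 1).sub (hasDerivAt_id z)).div (hasDerivAt_pow 3 z) (ne_of_gt hz3))
  have hA := hAin.sqrt (ne_of_gt hr)
  have hlin : HasDerivAt (fun w : ℝ => 2 * w - 1) 2 z := by
    simpa using ((hasDerivAt_id z).const_mul 2).sub_const 1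
  have hE := (half_inv_hasDerivAt h0).exp
  have := (hA.mul hlin).mul hE
  refine this.congr_deriv (Eq.symm ?_)
  simp only [Pi.mul_apply]
  set p := Real.sqrt z with hpdef
  set q := Real.sqrt (1 - z) with hqdef
  have hp : p ^ 2 = z := Real.sq_sqrt h0.le
  have hq : q ^ 2 = 1 - z := Real.sq_sqrt hz1.le
  have hp0 : 0 < p := Real.sqrt_pos.2 h0
  have hq0 : 0 < q := Real.sqrt_pos.2 hz1
  have hA' : Real.sqrt ((1 - z) / z ^ 3) = q / p ^ 3 := by
    rw [show (1 - z) / z ^ 3 = (q / p ^ 3) ^ 2 by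
      rw [div_pow, hq]; congr 1; rw [← hp]; ring]
    exact Real.sqrt_sq (by positivity)
  rw [hA']
  have hpq : p ^ 2 + q ^ 2 = 1 := by rw [hp, hq]; ring
  set E := Real.exp (1 / (2 * z)) with hEdef
  rw [← hp, show (1:ℝ) - p ^ 2 = q ^ 2 by rw [hp]; exact hq.symm]
  field_simp
  linear_combination (E * (2*p^4 - p^2 - 1)) * hpq

lemma K2_hasDerivAt {z : ℝ} (h0 : 0 < z) (h1 : z < 1) :
    HasDerivAt (fun w : ℝ => erfi (Real.sqrt ((1 - w) / (2 * w))))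
      (-(Real.exp (1 / (2 * z)) * Real.sqrt z) /
        (Real.sqrt (2 * Real.pi * Real.exp 1) * z ^ 2 * Real.sqrt (1 - z))) z := by
  have hz1 : (0:ℝ) < 1 - z := by linarith
  have h2z : (0:ℝ) < 2 * z := by linarith
  have hr : (0:ℝ) < (1 - z) / (2 * z) := div_pos hz1 h2z
  have hden : HasDerivAt (fun w : ℝ => 2 * w) 2 z := by
    simpa using (hasDerivAt_id z).const_mul 2
  have huin : HasDerivAt (fun w : ℝ => (1 - w) / (2 * w))
      (((0 - 1) * (2 * z) - (1 - z) * 2) / (2 * z) ^ 2) z :=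
    ((hasDerivAt_const z 1).sub (hasDerivAt_id z)).div hden (ne_of_gt h2z)
  have hu := huin.sqrt (ne_of_gt hr)
  have hcomp := (erfi_hasDerivAt (Real.sqrt ((1 - z) / (2 * z)))).comp z hu
  have hcomp' : HasDerivAt (fun w : ℝ => erfi (Real.sqrt ((1 - w) / (2 * w))))
      (2 / Real.sqrt Real.pi * Real.exp (Real.sqrt ((1 - z) / (2 * z)) ^ 2) *
        (((0 - 1) * (2 * z) - (1 - z) * 2) / (2 * z) ^ 2 /
          (2 * Real.sqrt ((1 - z) / (2 * z))))) z := by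
    exact hcomp
  refine hcomp'.congr_deriv (Eq.symm ?_)
  rw [Real.sq_sqrt hr.le]
  set p := Real.sqrt z with hpdef
  set q := Real.sqrt (1 - z) with hqdef
  set s2 := Real.sqrt 2 with hs2def
  set sπ := Real.sqrt Real.pi with hsπdef
  set eh := Real.exp (1/2 : ℝ) with hehdef
  have hp : p ^ 2 = z := Real.sq_sqrt h0.le
  have hq : q ^ 2 = 1 - z := Real.sq_sqrt hz1.le
  have hp0 : 0 < p := Real.sqrt_pos.2 h0
  have hq0 : 0 < q := Real.sqrt_pos.2 hz1
  have hs2 : s2 ^ 2 = 2 := Real.sq_sqrt (by norm_num)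
  have hs20 : 0 < s2 := Real.sqrt_pos.2 (by norm_num)
  have hsπ0 : 0 < sπ := Real.sqrt_pos.2 Real.pi_pos
  have heh0 : 0 < eh := Real.exp_pos _
  have hsπ : sπ ^ 2 = Real.pi := Real.sq_sqrt Real.pi_pos.le
  have heh : eh ^ 2 = Real.exp 1 := by
    rw [hehdef, sq, ← Real.exp_add]; norm_num
  have hs : Real.sqrt (2 * Real.pi * Real.exp 1) = s2 * sπ * eh := by
    rw [show 2 * Real.pi * Real.exp 1 = (s2 * sπ * eh) ^ 2 by
      rw [mul_pow, mul_pow, hs2, hsπ, heh]]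
    exact Real.sqrt_sq (by positivity)
  have hu' : Real.sqrt ((1 - z) / (2 * z)) = q / (s2 * p) := by
    rw [show (1 - z) / (2 * z) = (q / (s2 * p)) ^ 2 by
      rw [div_pow, mul_pow, hs2, hq, hp]]
    exact Real.sqrt_sq (by positivity)
  rw [hs, hu']
  rw [show (1 - z) / (2 * z) = 1 / (2 * z) - 1/2 by field_simp]
  rw [Real.exp_sub]
  set E := Real.exp (1 / (2 * z)) with hEdef
  have hE0 : 0 < E := Real.exp_pos _
  have hpq : p ^ 2 + q ^ 2 = 1 := by rw [hp, hq]; ring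
  rw [← hp, show (1:ℝ) - p ^ 2 = q ^ 2 by rw [hp]; exact hq.symm]
  have hehne : eh ≠ 0 := ne_of_gt heh0
  field_simp
  linear_combination (Real.exp (1/2)) * s2^2 * hpq + (Real.exp (1/2)) * hs2

lemma K_hasDerivAt {γ z : ℝ} (hγ : 0 < γ) (h0 : 0 < z) (h1 : z < 1) :
    HasDerivAt (Khom γ)
      (-(Real.exp (1 / (2 * z)) /
        (2 * γ * z ^ 3 * Real.sqrt z * Real.sqrt (1 - z)))) z := by
  have hz1 : (0:ℝ) < 1 - z := by linarith
  have h := ((K1_hasDerivAt h0 h1).const_mul (-(1/γ))).add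
    ((K2_hasDerivAt h0 h1).const_mul (Real.sqrt (2 * Real.pi * Real.exp 1) / γ))
  have hfun : Khom γ = fun w : ℝ =>
      -(1/γ) * (Real.sqrt ((1 - w) / w ^ 3) * (2 * w - 1) * Real.exp (1 / (2 * w)))
      + Real.sqrt (2 * Real.pi * Real.exp 1) / γ * erfi (Real.sqrt ((1 - w) / (2 * w))) := by
    funext w; simp only [Khom]; ring
  rw [hfun]
  refine h.congr_deriv (Eq.symm ?_)
  set p := Real.sqrt z with hpdef
  set q := Real.sqrt (1 - z) with hqdef
  set s := Real.sqrt (2 * Real.pi * Real.exp 1) with hsdef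
  set E := Real.exp (1 / (2 * z)) with hEdef
  have hp : p ^ 2 = z := Real.sq_sqrt h0.le
  have hp0 : 0 < p := Real.sqrt_pos.2 h0
  have hq0 : 0 < q := Real.sqrt_pos.2 hz1
  have hs0 : 0 < s := Real.sqrt_pos.2 (by positivity)
  have hE0 : 0 < E := Real.exp_pos _
  rw [← hp]
  field_simp
  ring

/-- The mean first exit time of (a,b) under optimal homodyne detection,
T(y) = (S(y,b)R(a,y) − S(a,y)R(y,b))/S(a,b), vanishes at a and b and solves
−γy T'(y) + 2γy³(1−y) T''(y) = −1 on (a,b). -/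
theorem hom_mean_exit_time (γ a b : ℝ) (hγ : 0 < γ) (ha : 0 < a) (hab : a < b)
    (hb : b < 1) :
    let T : ℝ → ℝ := fun y =>
      (Shom y b * Rhom γ a y - Shom a y * Rhom γ y b) / Shom a b
    T a = 0 ∧ T b = 0 ∧
    ∀ y ∈ Set.Ioo a b, ∃ t' t'' : ℝ,
      HasDerivAt T t' y ∧ HasDerivAt (deriv T) t'' y ∧
      -γ * y * t' + 2 * γ * y ^ 3 * (1 - y) * t'' = -1 := by
  intro T
  have hb0 : 0 < b := lt_trans ha hab
  have ha1 : a < 1 := lt_trans hab hb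
  -- continuity on the open interval (0,1)
  have hQc : ∀ z ∈ Set.Ioo (0:ℝ) 1, ContinuousAt Qhom z := fun z hz =>
    (Q_hasDerivAt hz.1 hz.2).differentiableAt.continuousAt
  have hKc : ∀ z ∈ Set.Ioo (0:ℝ) 1, ContinuousAt (Khom γ) z := fun z hz =>
    (K_hasDerivAt hγ hz.1 hz.2).differentiableAt.continuousAt
  have hQKc : ∀ z ∈ Set.Ioo (0:ℝ) 1, ContinuousAt (fun w => Qhom w * Khom γ w) z :=
    fun z hz => (hQc z hz).mul (hKc z hz)
  have hsub : ∀ u v : ℝ, u ∈ Set.Icc a b → v ∈ Set.Icc a b →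
      Set.uIcc u v ⊆ Set.Ioo (0:ℝ) 1 := by
    intro u v hu hv
    exact Set.ordConnected_Ioo.uIcc_subset ⟨lt_of_lt_of_le ha hu.1, lt_of_le_of_lt hu.2 hb⟩
      ⟨lt_of_lt_of_le ha hv.1, lt_of_le_of_lt hv.2 hb⟩
  have hQint : ∀ u v : ℝ, u ∈ Set.Icc a b → v ∈ Set.Icc a b →
      IntervalIntegrable Qhom MeasureTheory.volume u v := fun u v hu hv =>
    (ContinuousOn.mono (continuousOn_of_forall_continuousAt hQc) (hsub u v hu hv)).intervalIntegrable
  have hQKint : ∀ u v : ℝ, u ∈ Set.Icc a b → v ∈ Set.Icc a b →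
      IntervalIntegrable (fun w => Qhom w * Khom γ w) MeasureTheory.volume u v := fun u v hu hv =>
    (ContinuousOn.mono (continuousOn_of_forall_continuousAt hQKc) (hsub u v hu hv)).intervalIntegrable
  have hma : a ∈ Set.Icc a b := Set.left_mem_Icc.2 hab.le
  have hmb : b ∈ Set.Icc a b := Set.right_mem_Icc.2 hab.le
  -- positivity of S(a,b)
  have hQpos : ∀ z ∈ Set.Ioo a b, 0 < Qhom z := by
    intro z hz
    have h0 : 0 < z := lt_trans ha hz.1
    have h1 : z < 1 := lt_trans hz.2 hb
    have : 0 < z / (1 - z) := div_pos h0 (by linarith)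
    exact mul_pos (Real.exp_pos _) (Real.sqrt_pos.2 this)
  have hS0 : 0 < Shom a b :=
    intervalIntegral.intervalIntegral_pos_of_pos_on (hQint a b hma hmb) hQpos hab
  set C := Rhom γ a b / Shom a b with hCdef
  -- T agrees with G on Ioo a b
  set G : ℝ → ℝ := fun y => Rhom γ a y - C * Shom a y with hGdef
  have hTG : Set.EqOn T G (Set.Ioo a b) := by
    intro y hy
    have hmy : y ∈ Set.Icc a b := ⟨hy.1.le, hy.2.le⟩
    have hSadd : Shom a y + Shom y b = Shom a b :=
      intervalIntegral.integral_add_adjacent_intervals (hQint a y hma hmy) (hQint y b hmy hmb)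
    have hRadd : Rhom γ a y + Rhom γ y b = Rhom γ a b :=
      intervalIntegral.integral_add_adjacent_intervals (hQKint a y hma hmy) (hQKint y b hmy hmb)
    show (Shom y b * Rhom γ a y - Shom a y * Rhom γ y b) / Shom a b
      = Rhom γ a y - C * Shom a y
    rw [hCdef, div_eq_iff (ne_of_gt hS0)]
    field_simp
    linear_combination Rhom γ a y * hSadd - Shom a y * hRadd
  -- derivative of T on Ioo a b
  have hTd : ∀ y ∈ Set.Ioo a b, HasDerivAt T (Qhom y * Khom γ y - C * Qhom y) y := by
    intro y hy
    have h0y : 0 < y := lt_trans ha hy.1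
    have h1y : y < 1 := lt_trans hy.2 hb
    have hmy : y ∈ Set.Icc a b := ⟨hy.1.le, hy.2.le⟩
    have hy01 : y ∈ Set.Ioo (0:ℝ) 1 := ⟨h0y, h1y⟩
    have hSd : HasDerivAt (fun w => Shom a w) (Qhom y) y := by
      have := intervalIntegral.integral_hasDerivAt_right (hQint a y hma hmy)
        (ContinuousAt.stronglyMeasurableAtFilter isOpen_Ioo hQc y hy01)
        (hQc y hy01)
      simpa [Shom] using this
    have hRd : HasDerivAt (fun w => Rhom γ a w) (Qhom y * Khom γ y) y := by
      have := intervalIntegral.integral_hasDerivAt_right (hQKint a y hma hmy)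
        (ContinuousAt.stronglyMeasurableAtFilter isOpen_Ioo hQKc y hy01)
        (hQKc y hy01)
      simpa [Rhom] using this
    have hGd : HasDerivAt G (Qhom y * Khom γ y - C * Qhom y) y := hRd.sub (hSd.const_mul C)
    exact hGd.congr_of_eventuallyEq
      (Filter.eventuallyEq_of_mem (isOpen_Ioo.mem_nhds hy) hTG)
  refine ⟨?_, ?_, ?_⟩
  · show (Shom a b * Rhom γ a a - Shom a a * Rhom γ a b) / Shom a b = 0
    simp [Shom, Rhom]
  · show (Shom b b * Rhom γ a b - Shom a b * Rhom γ b b) / Shom a b = 0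
    simp [Shom, Rhom]
  · intro y hy
    have h0y : 0 < y := lt_trans ha hy.1
    have h1y : y < 1 := lt_trans hy.2 hb
    have h1y' : (0:ℝ) < 1 - y := by linarith
    have hQ' := Q_hasDerivAt h0y h1y
    have hK' := K_hasDerivAt hγ h0y h1y
    have hDd : HasDerivAt (fun w => Qhom w * Khom γ w - C * Qhom w)
        ((Qhom y * (1 / (2 * y ^ 2) + 1 / (2 * y * (1 - y)))) * Khom γ y
          + Qhom y * (-(Real.exp (1 / (2 * y)) /
              (2 * γ * y ^ 3 * Real.sqrt y * Real.sqrt (1 - y))))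
          - C * (Qhom y * (1 / (2 * y ^ 2) + 1 / (2 * y * (1 - y))))) y :=
      (hQ'.mul hK').sub (hQ'.const_mul C)
    have hT2 : HasDerivAt (deriv T)
        ((Qhom y * (1 / (2 * y ^ 2) + 1 / (2 * y * (1 - y)))) * Khom γ y
          + Qhom y * (-(Real.exp (1 / (2 * y)) /
              (2 * γ * y ^ 3 * Real.sqrt y * Real.sqrt (1 - y))))
          - C * (Qhom y * (1 / (2 * y ^ 2) + 1 / (2 * y * (1 - y))))) y := by
      refine hDd.congr_of_eventuallyEq
        (Filter.eventuallyEq_of_mem (isOpen_Ioo.mem_nhds hy) ?_)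
      intro w hw
      exact (hTd w hw).deriv
    refine ⟨_, _, hTd y hy, hT2, ?_⟩
    have key1 : -γ * y * Qhom y
        + 2 * γ * y ^ 3 * (1 - y) * (Qhom y * (1 / (2 * y ^ 2) + 1 / (2 * y * (1 - y)))) = 0 := by
      have h : -γ * y + 2 * γ * y ^ 3 * (1 - y) * (1 / (2 * y ^ 2) + 1 / (2 * y * (1 - y))) = 0 := by
        field_simp
        ring
      linear_combination Qhom y * h
    have key2 : 2 * γ * y ^ 3 * (1 - y) *
        (Qhom y * (-(Real.exp (1 / (2 * y)) /
          (2 * γ * y ^ 3 * Real.sqrt y * Real.sqrt (1 - y))))) = -1 := by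
      have hexp : Real.exp (-1 / (2 * y)) * Real.exp (1 / (2 * y)) = 1 := by
        rw [← Real.exp_add, show -1 / (2 * y) + 1 / (2 * y) = 0 by ring, Real.exp_zero]
      rw [Qhom]
      set p := Real.sqrt y with hpdef
      set q := Real.sqrt (1 - y) with hqdef
      have hp : p ^ 2 = y := Real.sq_sqrt h0y.le
      have hq : q ^ 2 = 1 - y := Real.sq_sqrt h1y'.le
      have hp0 : 0 < p := Real.sqrt_pos.2 h0y
      have hq0 : 0 < q := Real.sqrt_pos.2 h1y'
      have hsq : Real.sqrt (y / (1 - y)) = p / q := by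
        rw [show y / (1 - y) = (p / q) ^ 2 by rw [div_pow, hp, hq]]
        exact Real.sqrt_sq (by positivity)
      rw [hsq, show (1:ℝ) - y = q ^ 2 from hq.symm]
      field_simp
      have hexp' : Real.exp (-(1 / (2 * y))) * Real.exp (1 / (2 * y)) = 1 := by
        rw [← Real.exp_add, neg_add_cancel, Real.exp_zero]
      linear_combination (-1) * hexp'
    linear_combination (Khom γ y - C) * key1 + key2
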